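/- Let u ∈ U, a > 0, and ũ the sup-inf regularization. If (x,y) is a point where both u and ũ are differentiable and ũ(x,y) < u(x,y), then (∂ũ/∂x)(x,y) > 0, (∂ũ/∂y)(x,y) > 0, and (∂ũ/∂x)(x,y)·(∂ũ/∂y)(x,y) ≥ a/4. -/

import Mathlib

open Set

/-- `u` belongs to the class `U`: doubly increasing on the nonnegative quadrant,
nonnegative there, and vanishing on the coordinate axes. -/
def MemU (u : ℝ × ℝ → ℝ) : Prop :=
  (∀ p q : ℝ × ℝ, 0 ≤ p.1 → 0 ≤ p.2 → p.1 ≤ q.1 → p.2 ≤ q.2 → u p ≤ u q) ∧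
  (∀ p : ℝ × ℝ, 0 ≤ p.1 → 0 ≤ p.2 → 0 ≤ u p) ∧
  (∀ t : ℝ, 0 ≤ t → u (0, t) = 0 ∧ u (t, 0) = 0)

/-- The regularization `ũ_{z,p}(x,y)`. -/
noncomputable def tzp (u : ℝ × ℝ → ℝ) (a z p x y : ℝ) : ℝ :=
  sInf ((fun q : ℝ × ℝ => z + p * (x - q.1) + (a / p) * (y - q.2)) ''
    {q : ℝ × ℝ | 0 ≤ q.1 ∧ q.1 ≤ x ∧ 0 ≤ q.2 ∧ q.2 ≤ y ∧ u q ≤ z})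

/-- The regularization `ũ_z(x,y) = sup_{p>0} ũ_{z,p}(x,y)`. -/
noncomputable def tz (u : ℝ × ℝ → ℝ) (a z x y : ℝ) : ℝ :=
  sSup ((fun p => tzp u a z p x y) '' Ioi 0)

/-- The regularization `ũ(x,y) = inf_{z≥0} ũ_z(x,y)`. -/
noncomputable def tu (u : ℝ × ℝ → ℝ) (a x y : ℝ) : ℝ :=
  sInf ((fun z => tz u a z x y) '' Ici 0)

variable {u : ℝ × ℝ → ℝ} {a : ℝ}

lemma zero_mem_E (hu : MemU u) {z X Y : ℝ} (hz : 0 ≤ z) (hX : 0 ≤ X) (hY : 0 ≤ Y) :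
    ((0:ℝ),(0:ℝ)) ∈ {q : ℝ × ℝ | 0 ≤ q.1 ∧ q.1 ≤ X ∧ 0 ≤ q.2 ∧ q.2 ≤ Y ∧ u q ≤ z} := by
  refine ⟨le_refl 0, hX, le_refl 0, hY, ?_⟩
  have h := (hu.2.2 0 le_rfl).1
  show u (0, 0) ≤ z
  rw [h]; exact hz

lemma bddBelow_E (ha : 0 < a) {z p X Y : ℝ} (hp : 0 < p) :
    z ∈ lowerBounds ((fun q : ℝ × ℝ => z + p * (X - q.1) + (a / p) * (Y - q.2)) ''
      {q : ℝ × ℝ | 0 ≤ q.1 ∧ q.1 ≤ X ∧ 0 ≤ q.2 ∧ q.2 ≤ Y ∧ u q ≤ z}) := by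
  rintro b ⟨q, hq, rfl⟩
  have h1 : 0 ≤ p * (X - q.1) := mul_nonneg hp.le (by linarith [hq.2.1])
  have h2 : 0 ≤ a / p * (Y - q.2) := mul_nonneg (by positivity) (by linarith [hq.2.2.2.1])
  simp only []
  linarith

lemma le_tzp (hu : MemU u) (ha : 0 < a) {z p X Y : ℝ} (hz : 0 ≤ z) (hp : 0 < p)
    (hX : 0 ≤ X) (hY : 0 ≤ Y) : z ≤ tzp u a z p X Y :=
  le_csInf ⟨_, mem_image_of_mem _ (zero_mem_E hu hz hX hY)⟩ (fun b hb => bddBelow_E ha hp hb)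

lemma tzp_le (ha : 0 < a) {z p X Y : ℝ} (hp : 0 < p) {q : ℝ × ℝ}
    (hq : q ∈ {q : ℝ × ℝ | 0 ≤ q.1 ∧ q.1 ≤ X ∧ 0 ≤ q.2 ∧ q.2 ≤ Y ∧ u q ≤ z}) :
    tzp u a z p X Y ≤ z + p * (X - q.1) + (a / p) * (Y - q.2) :=
  csInf_le ⟨z, bddBelow_E ha hp⟩ ⟨q, hq, rfl⟩

lemma two_sqrt_le {s t : ℝ} (hs : 0 ≤ s) (ht : 0 ≤ t) : 2 * Real.sqrt (s * t) ≤ s + t := by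
  nlinarith [Real.sq_sqrt (mul_nonneg hs ht), Real.sqrt_nonneg (s * t), sq_nonneg (s - t),
    sq_nonneg (s + t - 2 * Real.sqrt (s * t))]

lemma tzp_le_sqrt (hu : MemU u) (ha : 0 < a) {z p X Y : ℝ} (hz : 0 ≤ z) (hp : 0 < p)
    (hX : 0 ≤ X) (hY : 0 ≤ Y) : tzp u a z p X Y ≤ z + Real.sqrt (a * X * Y) := by
  have hm1 : ((X, (0:ℝ)) : ℝ × ℝ) ∈ {q : ℝ × ℝ | 0 ≤ q.1 ∧ q.1 ≤ X ∧ 0 ≤ q.2 ∧ q.2 ≤ Y ∧ u q ≤ z} :=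
    ⟨hX, le_rfl, le_rfl, hY, by rw [(hu.2.2 X hX).2]; exact hz⟩
  have hm2 : (((0:ℝ), Y) : ℝ × ℝ) ∈ {q : ℝ × ℝ | 0 ≤ q.1 ∧ q.1 ≤ X ∧ 0 ≤ q.2 ∧ q.2 ≤ Y ∧ u q ≤ z} :=
    ⟨le_rfl, hX, hY, le_rfl, by rw [(hu.2.2 Y hY).1]; exact hz⟩
  have h1 := tzp_le (u := u) ha hp hm1
  have h2 := tzp_le (u := u) ha hp hm2
  simp only at h1 h2
  have hs : 0 ≤ Real.sqrt (a * X * Y) := Real.sqrt_nonneg _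
  rcases le_total (p * X) (a / p * Y) with h | h
  · have hle : p * X ≤ Real.sqrt (a * X * Y) := by
      have hsq : (p * X) ^ 2 ≤ a * X * Y := by
        have : (p * X) * (a / p * Y) = a * X * Y := by field_simp
        nlinarith [mul_nonneg hp.le hX]
      nlinarith [Real.sq_sqrt (show (0:ℝ) ≤ a * X * Y by positivity), mul_nonneg hp.le hX]
    linarith
  · have hle : a / p * Y ≤ Real.sqrt (a * X * Y) := by
      have hsq : (a / p * Y) ^ 2 ≤ a * X * Y := by
        have : (p * X) * (a / p * Y) = a * X * Y := by field_simp
        nlinarith [mul_nonneg (by positivity : (0:ℝ) ≤ a / p) hY]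
      nlinarith [Real.sq_sqrt (show (0:ℝ) ≤ a * X * Y by positivity),
        mul_nonneg (by positivity : (0:ℝ) ≤ a / p) hY]
    linarith

lemma tz_bddAbove (hu : MemU u) (ha : 0 < a) {z X Y : ℝ} (hz : 0 ≤ z) (hX : 0 ≤ X) (hY : 0 ≤ Y) :
    BddAbove ((fun p => tzp u a z p X Y) '' Ioi 0) := by
  refine ⟨z + Real.sqrt (a * X * Y), ?_⟩
  rintro b ⟨p, hp, rfl⟩
  exact tzp_le_sqrt hu ha hz hp hX hY

lemma tzp_le_tz (hu : MemU u) (ha : 0 < a) {z p X Y : ℝ} (hz : 0 ≤ z) (hp : 0 < p)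
    (hX : 0 ≤ X) (hY : 0 ≤ Y) : tzp u a z p X Y ≤ tz u a z X Y :=
  le_csSup (tz_bddAbove hu ha hz hX hY) (mem_image_of_mem _ hp)

lemma z_le_tz (hu : MemU u) (ha : 0 < a) {z X Y : ℝ} (hz : 0 ≤ z) (hX : 0 ≤ X) (hY : 0 ≤ Y) :
    z ≤ tz u a z X Y :=
  (le_tzp hu ha hz one_pos hX hY).trans (tzp_le_tz hu ha hz one_pos hX hY)

set_option maxHeartbeats 4000000 in
lemma tz_key (hu : MemU u) (ha : 0 < a) {x y z dx dy : ℝ}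
    (hx : 0 ≤ x) (hy : 0 ≤ y) (hz : 0 ≤ z) (hzu : z < u (x, y))
    (hdx : 0 < dx) (hdy : 0 < dy) :
    tz u a z x y + Real.sqrt (a * dx * dy) ≤ tz u a z (x + dx) (y + dy) := by
  have hX : 0 ≤ x + dx := by linarith
  have hY : 0 ≤ y + dy := by linarith
  have key : ∀ ε : ℝ, 0 < ε →
      tz u a z x y + Real.sqrt (a * dx * dy) ≤ tz u a z (x + dx) (y + dy) + ε := by
    intro ε hε
    have hne : ((fun p => tzp u a z p x y) '' Ioi 0).Nonempty :=
      ⟨_, mem_image_of_mem _ (mem_Ioi.2 one_pos)⟩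
    have hltε : tz u a z x y - ε < tz u a z x y := by linarith
    obtain ⟨b, ⟨p0, hp0m, rfl⟩, hb⟩ := exists_lt_of_lt_csSup hne hltε
    have hp0 : 0 < p0 := hp0m
    set d := Real.sqrt (a * dx * dy) with hd_def
    clear_value d
    have hd : 0 < d := by rw [hd_def]; exact Real.sqrt_pos.2 (by positivity)
    set c := tzp u a z p0 x y - z with hc_def
    clear_value c
    have hc : 0 ≤ c := by
      have := le_tzp hu ha hz hp0 hx hy
      rw [hc_def]; linarith
    set ph := Real.sqrt (a * dy / dx) with hph_def
    clear_value ph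
    have hph : 0 < ph := by rw [hph_def]; exact Real.sqrt_pos.2 (by positivity)
    have hph2 : ph ^ 2 = a * dy / dx := by rw [hph_def]; exact Real.sq_sqrt (by positivity)
    have hid1 : ph * dx = d := by
      rw [hd_def, hph_def, show a * dx * dy = a * dy / dx * dx ^ 2 by field_simp,
        Real.sqrt_mul (by positivity), Real.sqrt_sq hdx.le]
    have hid2 : a / ph * dy = d := by
      rw [← hid1, div_mul_eq_mul_div, div_eq_iff hph.ne']
      have : ph ^ 2 * dx = a * dy := by rw [hph2]; field_simp
      nlinarith [this]
    set R := max p0 ph / min p0 ph with hR_def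
    clear_value R
    have hminpos : 0 < min p0 ph := lt_min hp0 hph
    have hR : 1 ≤ R := by rw [hR_def]; exact (one_le_div hminpos).2 (min_le_max)
    have hRpos : 0 < R := lt_of_lt_of_le one_pos hR
    have hden : 0 < R * c + d := by nlinarith
    set r := R * (c + d) / (R * c + d) with hr_def
    clear_value r
    have hr_eq : r * (R * c + d) = R * (c + d) := by
      rw [hr_def]; field_simp
    have hr1 : 1 ≤ r := by
      rw [hr_def, le_div_iff₀ hden]; nlinarith
    have hrpos : 0 < r := lt_of_lt_of_le one_pos hr1
    have hP1 : r * c + (r / R) * d = c + d := by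
      field_simp
      linear_combination hr_eq
    have hP2 : c + d ≤ c / r + (R / r) * d := by
      have hkey : (c + R * d - r * (c + d)) * (R * c + d) = c * d * (R - 1) ^ 2 := by
        linear_combination (-(c + d)) * hr_eq
      have h1 : 0 ≤ c + R * d - r * (c + d) := by
        nlinarith [mul_nonneg (mul_nonneg hc hd.le) (sq_nonneg (R - 1))]
      have h2 : c / r + (R / r) * d = (c + R * d) / r := by ring
      rw [h2, le_div_iff₀ hrpos]; nlinarith
    have hP3 : c + d ≤ c / r + 2 * d := by
      have hkey : (d * r - c * (r - 1)) * (R * c + d) = d * (R * d + c) := by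
        linear_combination (d - c) * hr_eq
      have hq : 0 < R * d + c := by nlinarith
      have h1 : 0 ≤ d * r - c * (r - 1) := by nlinarith [mul_pos hd hq, hden, hkey]
      have h2 : c + d ≤ (c + 2 * d * r) / r := by
        rw [le_div_iff₀ hrpos]; nlinarith
      have h3 : (c + 2 * d * r) / r = c / r + 2 * d := by field_simp
      linarith
    -- choose p1 depending on branch
    obtain ⟨p1, hp1, hG2, hG3, hF2⟩ :
        ∃ p1 : ℝ, 0 < p1 ∧ c + d ≤ p0 / p1 * c + a / p1 * dy ∧
          c + d ≤ p1 / p0 * c + p1 * dx ∧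
          (∀ A B : ℝ, 0 ≤ A → 0 ≤ B →
            (p0 * A + a / p0 * B) / r ≤ p1 * A + a / p1 * B) := by
      rcases le_total ph p0 with hcase | hcase
      · have hRval : R = p0 / ph := by rw [hR_def, max_eq_left hcase, min_eq_right hcase]
        refine ⟨p0 / r, by positivity, ?_, ?_, ?_⟩
        · have e1 : p0 / (p0 / r) * c + a / (p0 / r) * dy = r * c + (r / R) * d := by
            rw [hRval, ← hid2]; field_simp; try ring
          rw [e1, hP1]
        · have e2 : (p0 / r) / p0 * c + (p0 / r) * dx = c / r + (R / r) * d := by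
            rw [hRval, ← hid1]; field_simp; try ring
          rw [e2]; exact hP2
        · intro A B hA hB
          rw [div_le_iff₀ hrpos]
          have e1 : (p0 / r * A + a / (p0 / r) * B) * r = p0 * A + r ^ 2 * (a / p0 * B) := by
            field_simp; try ring
          rw [e1]
          nlinarith [mul_nonneg (show 0 ≤ a / p0 * B by positivity)
            (show (0:ℝ) ≤ r ^ 2 - 1 by nlinarith)]
      · have hRval : R = ph / p0 := by rw [hR_def, max_eq_right hcase, min_eq_left hcase]
        refine ⟨p0 * r, by positivity, ?_, ?_, ?_⟩
        · have e1 : p0 / (p0 * r) * c + a / (p0 * r) * dy = c / r + (R / r) * d := by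
            rw [hRval, ← hid2]; field_simp; try ring
          rw [e1]; exact hP2
        · have e2 : (p0 * r) / p0 * c + (p0 * r) * dx = r * c + (r / R) * d := by
            rw [hRval, ← hid1]; field_simp; try ring
          rw [e2, hP1]
        · intro A B hA hB
          rw [div_le_iff₀ hrpos]
          have e1 : (p0 * r * A + a / (p0 * r) * B) * r = r ^ 2 * (p0 * A) + a / p0 * B := by
            field_simp; try ring
          rw [e1]
          nlinarith [mul_nonneg (show 0 ≤ p0 * A by positivity)
            (show (0:ℝ) ≤ r ^ 2 - 1 by nlinarith)]
    -- main per-point bound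
    have hmain : ∀ q ∈ {q : ℝ × ℝ | 0 ≤ q.1 ∧ q.1 ≤ x + dx ∧ 0 ≤ q.2 ∧ q.2 ≤ y + dy ∧ u q ≤ z},
        z + c + d ≤ z + p1 * (x + dx - q.1) + (a / p1) * (y + dy - q.2) := by
      rintro ⟨q1, q2⟩ ⟨hq1, hq2, hq3, hq4, hq5⟩
      simp only at hq1 hq2 hq3 hq4 hq5 ⊢
      by_cases h1 : q1 ≤ x
      · by_cases h2 : q2 ≤ y
        · -- both inside old box
          have hA : 0 ≤ x - q1 := by linarith
          have hB : 0 ≤ y - q2 := by linarith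
          have hmem : ((q1, q2) : ℝ × ℝ) ∈
              {q : ℝ × ℝ | 0 ≤ q.1 ∧ q.1 ≤ x ∧ 0 ≤ q.2 ∧ q.2 ≤ y ∧ u q ≤ z} :=
            ⟨hq1, h1, hq3, h2, hq5⟩
          have hcle : c ≤ p0 * (x - q1) + a / p0 * (y - q2) := by
            have h := tzp_le (u := u) ha hp0 hmem
            simp only at h
            rw [hc_def]; linarith
          have hamgm : 2 * d ≤ p1 * dx + a / p1 * dy := by
            have h := two_sqrt_le (s := p1 * dx) (t := a / p1 * dy) (by positivity) (by positivity)
            have he : Real.sqrt (p1 * dx * (a / p1 * dy)) = d := by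
              rw [hd_def]; congr 1; field_simp
            linarith [he ▸ h]
          have hF := hF2 _ _ hA hB
          have hcr : c / r ≤ (p0 * (x - q1) + a / p0 * (y - q2)) / r :=
            (div_le_div_iff_of_pos_right hrpos).2 hcle
          have hexpand : p1 * (x + dx - q1) + a / p1 * (y + dy - q2)
              = (p1 * (x - q1) + a / p1 * (y - q2)) + (p1 * dx + a / p1 * dy) := by ring
          linarith
        · -- q2 > y, hence q1 ≤ x, use (q1, y)
          push_neg at h2
          have hmem : ((q1, y) : ℝ × ℝ) ∈
              {q : ℝ × ℝ | 0 ≤ q.1 ∧ q.1 ≤ x ∧ 0 ≤ q.2 ∧ q.2 ≤ y ∧ u q ≤ z} := by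
            refine ⟨hq1, h1, hy, le_rfl, ?_⟩
            exact le_trans (hu.1 (q1, y) (q1, q2) hq1 hy le_rfl h2.le) hq5
          have hcle : c ≤ p0 * (x - q1) := by
            have h := tzp_le (u := u) ha hp0 hmem
            simp only at h
            have he : a / p0 * (y - y) = 0 := by ring
            rw [hc_def]; linarith
          have h3 : p1 / p0 * c ≤ p1 * (x - q1) := by
            have hm := mul_le_mul_of_nonneg_left hcle (by positivity : (0:ℝ) ≤ p1 / p0)
            have he : p1 / p0 * (p0 * (x - q1)) = p1 * (x - q1) := by field_simp; try ring
            linarith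
          have h4 : 0 ≤ a / p1 * (y + dy - q2) := mul_nonneg (by positivity) (by linarith)
          have hexp : p1 * (x + dx - q1) = p1 * (x - q1) + p1 * dx := by ring
          linarith
      · -- q1 > x, hence q2 ≤ y, use (x, q2)
        push_neg at h1
        have h2 : q2 ≤ y := by
          by_contra h2
          push_neg at h2
          have := hu.1 (x, y) (q1, q2) hx hy h1.le h2.le
          linarith
        have hmem : ((x, q2) : ℝ × ℝ) ∈
            {q : ℝ × ℝ | 0 ≤ q.1 ∧ q.1 ≤ x ∧ 0 ≤ q.2 ∧ q.2 ≤ y ∧ u q ≤ z} := by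
          refine ⟨hx, le_rfl, hq3, h2, ?_⟩
          exact le_trans (hu.1 (x, q2) (q1, q2) hx hq3 h1.le le_rfl) hq5
        have hcle : c ≤ a / p0 * (y - q2) := by
          have h := tzp_le (u := u) ha hp0 hmem
          simp only at h
          have he : p0 * (x - x) = 0 := by ring
          rw [hc_def]; linarith
        have h3 : p0 / p1 * c ≤ a / p1 * (y - q2) := by
          have hm := mul_le_mul_of_nonneg_left hcle (by positivity : (0:ℝ) ≤ p0 / p1)
          have he : p0 / p1 * (a / p0 * (y - q2)) = a / p1 * (y - q2) := by field_simp
          linarith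
        have h4 : 0 ≤ p1 * (x + dx - q1) := mul_nonneg hp1.le (by linarith)
        have hexp : a / p1 * (y + dy - q2) = a / p1 * (y - q2) + a / p1 * dy := by ring
        linarith
    have h5 : z + c + d ≤ tzp u a z p1 (x + dx) (y + dy) := by
      refine le_csInf ⟨_, mem_image_of_mem _ (zero_mem_E hu hz hX hY)⟩ ?_
      rintro b ⟨q, hq, rfl⟩
      exact hmain q hq
    have h6 : tzp u a z p1 (x + dx) (y + dy) ≤ tz u a z (x + dx) (y + dy) :=
      tzp_le_tz hu ha hz hp1 hX hY
    have h7 : tz u a z x y - ε < z + c := by rw [hc_def]; linarith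
    linarith
  by_contra hcon
  push_neg at hcon
  have := key ((tz u a z x y + Real.sqrt (a * dx * dy) - tz u a z (x + dx) (y + dy)) / 2)
    (by linarith)
  linarith

lemma tu_key (hu : MemU u) (ha : 0 < a) {x y dx dy : ℝ}
    (hx : 0 ≤ x) (hy : 0 ≤ y) (hdx : 0 < dx) (hdy : 0 < dy)
    (hgap : tu u a x y + Real.sqrt (a * dx * dy) ≤ u (x, y)) :
    tu u a x y + Real.sqrt (a * dx * dy) ≤ tu u a (x + dx) (y + dy) := by
  have hne : ((fun z => tz u a z (x + dx) (y + dy)) '' Ici 0).Nonempty :=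
    ⟨_, mem_image_of_mem _ (mem_Ici.2 le_rfl)⟩
  rw [show tu u a (x + dx) (y + dy)
      = sInf ((fun z => tz u a z (x + dx) (y + dy)) '' Ici 0) from rfl]
  refine le_csInf hne ?_
  rintro b ⟨z, hzm, rfl⟩
  rw [mem_Ici] at hzm
  by_cases hcase : z < u (x, y)
  · have h1 : tu u a x y ≤ tz u a z x y := by
      refine csInf_le ⟨0, ?_⟩ (mem_image_of_mem _ (mem_Ici.2 hzm))
      rintro w ⟨z', hz', rfl⟩
      rw [mem_Ici] at hz'
      exact le_trans hz' (z_le_tz hu ha hz' hx hy)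
    have h2 := tz_key hu ha hx hy hzm hcase hdx hdy
    simp only
    linarith
  · push_neg at hcase
    have h3 : z ≤ tz u a z (x + dx) (y + dy) :=
      z_le_tz hu ha hzm (by linarith) (by linarith)
    simp only
    linarith

theorem stmt_14 (u : ℝ × ℝ → ℝ) (hu : MemU u) (a : ℝ) (ha : 0 < a)
    (x y : ℝ) (hx : 0 ≤ x) (hy : 0 ≤ y)
    (hdu : DifferentiableAt ℝ u (x, y))
    (hdt : DifferentiableAt ℝ (fun q : ℝ × ℝ => tu u a q.1 q.2) (x, y))
    (hlt : tu u a x y < u (x, y)) :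
    0 < deriv (fun t => tu u a t y) x ∧ 0 < deriv (fun t => tu u a x t) y ∧
      a / 4 ≤ deriv (fun t => tu u a t y) x * deriv (fun t => tu u a x t) y := by
  have hF : HasFDerivAt (fun q : ℝ × ℝ => tu u a q.1 q.2)
      (fderiv ℝ (fun q : ℝ × ℝ => tu u a q.1 q.2) (x, y)) (x, y) := hdt.hasFDerivAt
  set L := fderiv ℝ (fun q : ℝ × ℝ => tu u a q.1 q.2) (x, y) with hL_def
  clear_value L
  -- partial derivatives
  have hDx : HasDerivAt (fun t => tu u a t y) (L (1, 0)) x := by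
    have hin : HasDerivAt (fun t : ℝ => ((t, y) : ℝ × ℝ)) ((1:ℝ), (0:ℝ)) x :=
      (hasDerivAt_id x).prodMk (hasDerivAt_const x y)
    have hcomp := hF.comp_hasDerivAt x hin
    exact hcomp
  have hDy : HasDerivAt (fun t => tu u a x t) (L (0, 1)) y := by
    have hin : HasDerivAt (fun t : ℝ => ((x, t) : ℝ × ℝ)) ((0:ℝ), (1:ℝ)) y :=
      (hasDerivAt_const y x).prodMk (hasDerivAt_id y)
    have hcomp := hF.comp_hasDerivAt y hin
    exact hcomp
  rw [hDx.deriv, hDy.deriv]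
  -- the directional increment bound
  have H : ∀ t : ℝ, 0 < t → Real.sqrt (a * t) ≤ L (1, 0) + t * L (0, 1) := by
    intro t ht
    have hst : 0 < Real.sqrt (a * t) := Real.sqrt_pos.2 (by positivity)
    set δ := (u (x, y) - tu u a x y) / Real.sqrt (a * t) with hδ_def
    have hδ : 0 < δ := by apply div_pos (by linarith) hst
    -- derivative along h ↦ (x + h, y + t h)
    have hin : HasDerivAt (fun h : ℝ => ((x + h, y + t * h) : ℝ × ℝ)) ((1:ℝ), t) 0 := by
      have h1 : HasDerivAt (fun h : ℝ => x + h) 1 0 := by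
        simpa using (hasDerivAt_id (0:ℝ)).const_add x
      have h2 : HasDerivAt (fun h : ℝ => y + t * h) t 0 := by
        simpa using ((hasDerivAt_id (0:ℝ)).const_mul t).const_add y
      exact h1.prodMk h2
    have hF' : HasFDerivAt (fun q : ℝ × ℝ => tu u a q.1 q.2) L (x + 0, y + t * 0) := by norm_num; exact hF
    have hg : HasDerivAt (fun h : ℝ => tu u a (x + h) (y + t * h)) (L (1, t)) 0 := by
      have hcomp := hF'.comp_hasDerivAt 0 hin
      exact hcomp
    have hLlin : L (1, t) = L (1, 0) + t * L (0, 1) := by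
      have he : ((1:ℝ), t) = ((1:ℝ), (0:ℝ)) + t • ((0:ℝ), (1:ℝ)) := by
        simp [Prod.ext_iff]
      rw [he, map_add, map_smul, smul_eq_mul]
    rw [← hLlin]
    -- slope bound
    rw [hasDerivAt_iff_tendsto_slope] at hg
    have hg' : Filter.Tendsto (slope (fun h : ℝ => tu u a (x + h) (y + t * h)) 0)
        (nhdsWithin 0 (Ioi 0)) (nhds (L (1, t))) :=
      hg.mono_left (nhdsWithin_mono 0 (fun h hh => mem_compl_singleton_iff.2 (ne_of_gt hh)))
    refine ge_of_tendsto hg' ?_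
    refine Filter.eventually_of_mem (Ioo_mem_nhdsGT hδ) ?_
    intro h hh
    obtain ⟨hh0, hhδ⟩ := hh
    have hsq : Real.sqrt (a * h * (t * h)) = Real.sqrt (a * t) * h := by
      rw [show a * h * (t * h) = a * t * h ^ 2 by ring, Real.sqrt_mul (by positivity),
        Real.sqrt_sq hh0.le]
    have hgap : tu u a x y + Real.sqrt (a * h * (t * h)) ≤ u (x, y) := by
      rw [hsq]
      have : Real.sqrt (a * t) * h ≤ Real.sqrt (a * t) * δ :=
        mul_le_mul_of_nonneg_left hhδ.le hst.le
      have hδe : Real.sqrt (a * t) * δ = u (x, y) - tu u a x y := by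
        rw [hδ_def]; field_simp
      linarith
    have hkey := tu_key hu ha hx hy hh0 (by positivity : 0 < t * h) hgap
    rw [hsq] at hkey
    have hslope : slope (fun h : ℝ => tu u a (x + h) (y + t * h)) 0 h
        = (tu u a (x + h) (y + t * h) - tu u a (x + 0) (y + t * 0)) / h := by
      rw [slope_def_field]; norm_num
    rw [hslope]
    rw [le_div_iff₀ hh0]
    have he2 : tu u a (x + 0) (y + t * 0) = tu u a x y := by norm_num
    rw [he2]
    linarith
  -- conclude
  have hDy_pos : 0 < L (0, 1) := by
    by_contra hcon
    push_neg at hcon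
    have ht : 0 < (L (1, 0) ^ 2 + 1) / a := by positivity
    have h1 := H _ ht
    have he : a * ((L (1, 0) ^ 2 + 1) / a) = L (1, 0) ^ 2 + 1 := by field_simp
    rw [he] at h1
    have h2 : 0 ≤ Real.sqrt (L (1, 0) ^ 2 + 1) := Real.sqrt_nonneg _
    have h3 : Real.sqrt (L (1, 0) ^ 2 + 1) ^ 2 = L (1, 0) ^ 2 + 1 :=
      Real.sq_sqrt (by positivity)
    have h4 : (L (1, 0) ^ 2 + 1) / a * L (0, 1) ≤ 0 :=
      mul_nonpos_of_nonneg_of_nonpos ht.le hcon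
    nlinarith
  have ht0 : 0 < a / (4 * L (0, 1) ^ 2) := by positivity
  have h1 := H _ ht0
  have he : a * (a / (4 * L (0, 1) ^ 2)) = (a / (2 * L (0, 1))) ^ 2 := by
    field_simp; ring
  rw [he, Real.sqrt_sq (by positivity)] at h1
  have he2 : a / (4 * L (0, 1) ^ 2) * L (0, 1) = a / (4 * L (0, 1)) := by
    field_simp
  rw [he2] at h1
  have hq : a / (2 * L (0, 1)) - a / (4 * L (0, 1)) = a / (4 * L (0, 1)) := by
    field_simp; ring
  have hDx_ge : a / (4 * L (0, 1)) ≤ L (1, 0) := by linarith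
  have hDx_pos : 0 < L (1, 0) := lt_of_lt_of_le (by positivity) hDx_ge
  refine ⟨hDx_pos, hDy_pos, ?_⟩
  have hm := mul_le_mul_of_nonneg_right hDx_ge hDy_pos.le
  have he3 : a / (4 * L (0, 1)) * L (0, 1) = a / 4 := by
    field_simp
  linarith
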